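/- Let G = (V,E_G) be a finite simple graph with maximum degree Δ, and let A be a monotone, locally optimal allocation rule for the vertex-cover auction on G. Then for any nonnegative cost vector c : V → ℝ, the total payment of the threshold-payment mechanism determined by A satisfies p_M(c) = ∑_{v∈A(c)} t_v ≤ Δ·∑_{v∈V} c_v, where t_v is the threshold bid of v at the bid vector c. -/
import Mathlib


open Finset

/-- A set system `(E, F)` is monopoly-free if no element of the ground set
belongs to every feasible set. -/
def MonopolyFree {E : Type*} (F : Set (Finset E)) : Prop :=
  ∀ e : E, ∃ T ∈ F, e ∉ T

/-- `S` is a cheapest feasible set of the set system `(E, F)` with respect to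
the cost vector `c`. -/
def IsCheapest {E : Type*} (F : Set (Finset E)) (c : E → ℝ) (S : Finset E) : Prop :=
  S ∈ F ∧ ∀ T ∈ F, ∑ e ∈ S, c e ≤ ∑ e ∈ T, c e

/-- Bid vectors satisfying conditions (1), (2) and (3). -/
def BidsNTU {E : Type*} [DecidableEq E] (F : Set (Finset E)) (c : E → ℝ) (S : Finset E) :
    Set (E → ℝ) :=
  {b | (∀ e ∈ S, c e ≤ b e) ∧
       (∀ T ∈ F, ∑ e ∈ S \ T, b e ≤ ∑ e ∈ T \ S, c e) ∧
       (∀ e ∈ S, ∃ T ∈ F, e ∉ T ∧ ∑ e' ∈ S \ T, b e' = ∑ e' ∈ T \ S, c e')}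

/-- Bid vectors satisfying conditions (1*), (2) and (3). -/
def BidsTU {E : Type*} [DecidableEq E] (F : Set (Finset E)) (c : E → ℝ) (S : Finset E) :
    Set (E → ℝ) :=
  {b | (∀ e ∈ S, 0 ≤ b e) ∧
       (∀ T ∈ F, ∑ e ∈ S \ T, b e ≤ ∑ e ∈ T \ S, c e) ∧
       (∀ e ∈ S, ∃ T ∈ F, e ∉ T ∧ ∑ e' ∈ S \ T, b e' = ∑ e' ∈ T \ S, c e')}

noncomputable def NTUmin {E : Type*} [DecidableEq E] (F : Set (Finset E)) (c : E → ℝ)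
    (S : Finset E) : ℝ :=
  sInf ((fun b => ∑ e ∈ S, b e) '' BidsNTU F c S)

noncomputable def NTUmax {E : Type*} [DecidableEq E] (F : Set (Finset E)) (c : E → ℝ)
    (S : Finset E) : ℝ :=
  sSup ((fun b => ∑ e ∈ S, b e) '' BidsNTU F c S)

noncomputable def TUmin {E : Type*} [DecidableEq E] (F : Set (Finset E)) (c : E → ℝ)
    (S : Finset E) : ℝ :=
  sInf ((fun b => ∑ e ∈ S, b e) '' BidsTU F c S)

noncomputable def TUmax {E : Type*} [DecidableEq E] (F : Set (Finset E)) (c : E → ℝ)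
    (S : Finset E) : ℝ :=
  sSup ((fun b => ∑ e ∈ S, b e) '' BidsTU F c S)

/-- `T` is a vertex cover of the graph `G`. -/
def IsVertexCover {V : Type*} (G : SimpleGraph V) (T : Finset V) : Prop :=
  ∀ ⦃v w : V⦄, G.Adj v w → v ∈ T ∨ w ∈ T

/-- The vertex-cover set system of a graph `G`: the ground set is the vertex
set and the feasible sets are the vertex covers of `G`. -/
def VCSystem {V : Type*} (G : SimpleGraph V) : Set (Finset V) :=
  {T | IsVertexCover G T}

/-- An allocation rule is monotone if a losing agent stays losing when it
raises its bid. -/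
def MonotoneRule {V : Type*} [DecidableEq V] (A : (V → ℝ) → Finset V) : Prop :=
  ∀ (b : V → ℝ) (v : V) (x : ℝ), v ∉ A b → b v < x → v ∉ A (Function.update b v x)

/-- An allocation rule is locally optimal if a vertex bidding strictly more
than the total bid of its neighbours is never chosen. -/
def LocallyOptimal {V : Type*} [Fintype V] [DecidableEq V] (G : SimpleGraph V)
    [DecidableRel G.Adj] (A : (V → ℝ) → Finset V) : Prop :=
  ∀ (b : V → ℝ) (v : V), (∑ w ∈ G.neighborFinset v, b w) < b v → v ∉ A b

/-- The threshold bid of agent `v` at the bid vector `b`. -/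
noncomputable def threshold {V : Type*} [DecidableEq V] (A : (V → ℝ) → Finset V)
    (b : V → ℝ) (v : V) : ℝ :=
  sSup {x : ℝ | v ∈ A (Function.update b v x)}

/-- The total payment of the threshold-payment mechanism determined by `A`
on true costs `c`. -/
noncomputable def totalPayment {V : Type*} [DecidableEq V] (A : (V → ℝ) → Finset V)
    (c : V → ℝ) : ℝ :=
  ∑ v ∈ A c, threshold A c v

theorem locally_optimal_payment_bound {V : Type*} [Fintype V] [DecidableEq V]
    (G : SimpleGraph V) [DecidableRel G.Adj] (A : (V → ℝ) → Finset V)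
    (hA : ∀ b, IsVertexCover G (A b)) (hmono : MonotoneRule A)
    (hloc : LocallyOptimal G A) (c : V → ℝ) (hc : ∀ v, 0 ≤ c v) :
    totalPayment A c ≤ (G.maxDegree : ℝ) * ∑ v, c v := by

  have hthr : ∀ v, threshold A c v ≤ ∑ w ∈ G.neighborFinset v, c w := by
    intro v
    have hnn : 0 ≤ ∑ w ∈ G.neighborFinset v, c w := Finset.sum_nonneg fun w _ => hc w
    unfold threshold
    rcases Set.eq_empty_or_nonempty {x : ℝ | v ∈ A (Function.update c v x)} with h | h
    · rw [h, Real.sSup_empty]; exact hnn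
    · apply csSup_le h
      intro x hx
      by_contra hlt
      push_neg at hlt
      have hbig : (∑ w ∈ G.neighborFinset v, (Function.update c v x) w) <
          (Function.update c v x) v := by
        have heq : ∀ w ∈ G.neighborFinset v, Function.update c v x w = c w := by
          intro w hw
          have hwne : w ≠ v := by
            intro h; subst h
            exact G.irrefl ((SimpleGraph.mem_neighborFinset _ _ _).mp hw)
          simp [Function.update_of_ne hwne]
        rw [Finset.sum_congr rfl heq, Function.update_self]
        exact hlt
      exact (hloc _ v hbig) hx
  calc totalPayment A c ≤ ∑ v ∈ A c, ∑ w ∈ G.neighborFinset v, c w :=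
        Finset.sum_le_sum fun v _ => hthr v
    _ ≤ ∑ v, ∑ w ∈ G.neighborFinset v, c w :=
        Finset.sum_le_sum_of_subset_of_nonneg (Finset.subset_univ _)
          (fun v _ _ => Finset.sum_nonneg fun w _ => hc w)
    _ = ∑ w, (G.degree w : ℝ) * c w := by
        simp_rw [SimpleGraph.neighborFinset_eq_filter, Finset.sum_filter]
        rw [Finset.sum_comm]
        refine Finset.sum_congr rfl fun w _ => ?_
        rw [← Finset.sum_filter]
        have hfw : Finset.filter (fun v => G.Adj v w) Finset.univ = G.neighborFinset w := by
          ext v; simp [SimpleGraph.adj_comm]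
        rw [hfw, Finset.sum_const, SimpleGraph.card_neighborFinset_eq_degree, nsmul_eq_mul]
    _ ≤ ∑ w, (G.maxDegree : ℝ) * c w :=
        Finset.sum_le_sum fun w _ => mul_le_mul_of_nonneg_right
          (by exact_mod_cast G.degree_le_maxDegree w) (hc w)
    _ = (G.maxDegree : ℝ) * ∑ v, c v := by rw [← Finset.mul_sum]
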